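/- arXiv:1901.08628 — 8 statements merged into one kernel-verified Lean document; each statement's English description precedes it below -/
import Mathlib

section
/- Let (S,d) be a finite metric space, let c_1, ..., c_k ∈ S be pairwise distinct, let C0 ⊆ S (with k ≥ 1 or C0 nonempty), and let ρ ≥ 0 be such that d(s, {c_1, ..., c_k} ∪ C0) ≤ ρ for every s ∈ S. Let a be a closest-center assignment for c_1, ..., c_k and C0, with clusters L_i = a^{-1}(c_i). For each i ∈ {1, ..., k} let y_i be any element of L_i ∪ {c_i}. Then for every s ∈ S, d(s, {y_1, ..., y_k} ∪ C0) ≤ 2ρ. (Center-swapping lemma: replacing each center by an arbitrary element of its cluster at most doubles the covering radius; used in the proofs of Theorems 1 and 2.) -/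
/-- center-swapping lemma: if the pairwise distinct centers
`c 1, ..., c k` together with `C0` cover every point within radius `ρ`, `a` is a
closest-center assignment (so the cluster of `c i` is `{s | a s = c i}`), and each `y i`
is an arbitrary element of its cluster `L i` (or `c i` itself), then the swapped centers
`y 1, ..., y k` together with `C0` cover every point within radius `2 * ρ`. -/
theorem stmt2 {X : Type*} [MetricSpace X] [Fintype X] [Nonempty X] {k : ℕ}
    (c : Fin k → X) (hinj : Function.Injective c)
    (C0 : Set X) (hne : 1 ≤ k ∨ C0.Nonempty)
    (ρ : ℝ) (hρ : 0 ≤ ρ)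
    (hcov : ∀ s : X, Metric.infDist s (Set.range c ∪ C0) ≤ ρ)
    (a : X → X)
    (ha1 : ∀ s, a s ∈ Set.range c ∪ C0)
    (ha2 : ∀ s, dist s (a s) = Metric.infDist s (Set.range c ∪ C0))
    (y : Fin k → X)
    (hy : ∀ i, y i ∈ {s | a s = c i} ∪ {c i}) :
    ∀ s : X, Metric.infDist s (Set.range y ∪ C0) ≤ 2 * ρ := by
  intro s
  have hds : dist s (a s) ≤ ρ := by rw [ha2 s]; exact hcov s
  rcases ha1 s with ⟨i, hi⟩ | hC0
  · -- a s = c i; use y i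
    have hyi : dist (y i) (c i) ≤ ρ := by
      rcases hy i with hcl | hc
      · have : a (y i) = c i := hcl
        calc dist (y i) (c i) = dist (y i) (a (y i)) := by rw [this]
          _ ≤ ρ := by rw [ha2]; exact hcov (y i)
      · rw [Set.mem_singleton_iff.mp hc]; simpa using hρ
    have hds' : dist s (c i) ≤ ρ := by rw [hi]; exact hds
    have : dist s (y i) ≤ 2 * ρ := by
      calc dist s (y i) ≤ dist s (c i) + dist (c i) (y i) := dist_triangle _ _ _
        _ ≤ ρ + ρ := add_le_add hds' (by rw [dist_comm]; exact hyi)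
        _ = 2 * ρ := by ring
    exact le_trans (Metric.infDist_le_dist_of_mem (Set.mem_union_left _ ⟨i, rfl⟩)) this
  · exact le_trans (Metric.infDist_le_dist_of_mem (Set.mem_union_right _ hC0))
      (le_trans hds (by linarith))
end

section
/- Let (X,d) be a finite metric space, let S' ⊆ X be nonempty, let C0' ⊆ X, let k ∈ ℕ, and let R, Δ ≥ 0. Suppose S' = A ∪ B, where every a ∈ A satisfies d(a, C0') ≤ R (in particular A = ∅ if C0' = ∅), and B ⊆ B_1 ∪ ... ∪ B_k for sets B_j ⊆ X with d(x, y) ≤ Δ for all x, y belonging to a common B_j. Let c_1, ..., c_k be a greedy sequence of length k on S' with respect to C0'. Then every s ∈ S' satisfies d(s, {c_1, ..., c_k} ∪ C0') ≤ max(R, Δ). (Greedy covering lemma: the three-case pigeonhole argument at the core of the proofs of Theorems 1 and 2.) -/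
/-- `c` is a greedy (farthest-point) sequence of length `k` on `S'` with respect to the
initially given centers `C0'`. -/
def IsGreedySeq {X : Type*} [MetricSpace X] (S' C0' : Set X) {k : ℕ} (c : Fin k → X) : Prop :=
  (∀ i, c i ∈ S') ∧
  ∀ i : Fin k, ∀ s ∈ S',
    Metric.infDist s (C0' ∪ c '' {j | j < i}) ≤ Metric.infDist (c i) (C0' ∪ c '' {j | j < i})

/-- greedy covering lemma: if `S' = A ∪ B`, points of `A` are within
distance `R` of `C0'` (and `A = ∅` whenever `C0' = ∅`), and `B` is covered by `k` sets
`Bsets j`, each of diameter at most `Δ`, then a greedy sequence of length `k` on `S'`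
with respect to `C0'` covers every point of `S'` within radius `max R Δ`. -/
theorem stmt3 {X : Type*} [MetricSpace X] [Fintype X]
    (S' : Set X) (hS' : S'.Nonempty) (C0' : Set X) (k : ℕ)
    (R Δ : ℝ) (hR : 0 ≤ R) (hΔ : 0 ≤ Δ)
    (A B : Set X) (hAB : S' = A ∪ B)
    (hA : ∀ a ∈ A, Metric.infDist a C0' ≤ R)
    (hA0 : C0' = ∅ → A = ∅)
    (Bsets : Fin k → Set X)
    (hBsub : B ⊆ ⋃ j, Bsets j)
    (hBdiam : ∀ j, ∀ x ∈ Bsets j, ∀ y ∈ Bsets j, dist x y ≤ Δ)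
    (c : Fin k → X) (hc : IsGreedySeq S' C0' c) :
    ∀ s ∈ S', Metric.infDist s (Set.range c ∪ C0') ≤ max R Δ := by
  classical
  obtain ⟨hcS, hgreedy⟩ := hc
  intro s hs
  by_contra hcon
  push_neg at hcon
  have hCsub : ∀ i : Fin k, C0' ∪ c '' {j | j < i} ⊆ Set.range c ∪ C0' := by
    intro i x hx
    rcases hx with hx | hx
    · exact Or.inr hx
    · rcases hx with ⟨j, _, rfl⟩; exact Or.inl ⟨j, rfl⟩
  have key : ∀ i : Fin k, Metric.infDist (c i) (C0' ∪ c '' {j | j < i}) ≤ max R Δ →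
      (C0' ∪ c '' {j | j < i}).Nonempty → False := by
    intro i hle hne
    have h1 := hgreedy i s hs
    have h2 : Metric.infDist s (Set.range c ∪ C0') ≤
        Metric.infDist s (C0' ∪ c '' {j | j < i}) :=
      Metric.infDist_le_infDist_of_subset (hCsub i) hne
    linarith
  have hC0ne_of_A : ∀ x, x ∈ A → C0'.Nonempty := by
    intro x hx
    rcases Set.eq_empty_or_nonempty C0' with h | h
    · rw [hA0 h] at hx; exact absurd hx (Set.notMem_empty x)
    · exact h
  have hsB : s ∈ B := by
    rw [hAB] at hs
    rcases hs with hsA | hsB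
    · exfalso
      have hC0 := hC0ne_of_A s hsA
      have h1 : Metric.infDist s (Set.range c ∪ C0') ≤ Metric.infDist s C0' :=
        Metric.infDist_le_infDist_of_subset Set.subset_union_right hC0
      have h2 := hA s hsA
      have h3 : R ≤ max R Δ := le_max_left _ _
      linarith
    · exact hsB
  have hcB : ∀ i, c i ∈ B := by
    intro i
    have hmem := hcS i
    rw [hAB] at hmem
    rcases hmem with hA' | hB'
    · exfalso
      have hC0 := hC0ne_of_A _ hA'
      refine key i ?_ (hC0.mono Set.subset_union_left)
      calc Metric.infDist (c i) (C0' ∪ c '' {j | j < i})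
          ≤ Metric.infDist (c i) C0' :=
            Metric.infDist_le_infDist_of_subset Set.subset_union_left hC0
        _ ≤ R := hA _ hA'
        _ ≤ max R Δ := le_max_left _ _
    · exact hB'
  have hbox : ∀ o : Option (Fin k), ∃ j, o.elim s c ∈ Bsets j := by
    intro o
    rcases o with _ | i
    · exact Set.mem_iUnion.mp (hBsub hsB)
    · exact Set.mem_iUnion.mp (hBsub (hcB i))
  choose f hf using hbox
  have hcard : Fintype.card (Fin k) < Fintype.card (Option (Fin k)) := by
    simp
  obtain ⟨a, b, hab, hfab⟩ := Fintype.exists_ne_map_eq_of_card_lt f hcard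
  have mixed : ∀ i : Fin k, f none = f (some i) → False := by
    intro i heq
    have hfs : s ∈ Bsets (f none) := hf none
    have hfc : c i ∈ Bsets (f none) := heq ▸ hf (some i)
    have hd : dist s (c i) ≤ Δ := hBdiam (f none) s hfs (c i) hfc
    have h1 : Metric.infDist s (Set.range c ∪ C0') ≤ dist s (c i) :=
      Metric.infDist_le_dist_of_mem (Or.inl ⟨i, rfl⟩)
    have h3 : Δ ≤ max R Δ := le_max_right _ _
    linarith
  have pair : ∀ i i' : Fin k, i < i' → f (some i) = f (some i') → False := by
    intro i i' hii' heq
    have hmem : c i ∈ C0' ∪ c '' {j | j < i'} := Or.inr ⟨i, hii', rfl⟩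
    have hfc : c i ∈ Bsets (f (some i')) := heq ▸ hf (some i)
    have hd : dist (c i') (c i) ≤ Δ :=
      hBdiam (f (some i')) (c i') (hf (some i')) (c i) hfc
    refine key i' ?_ ⟨c i, hmem⟩
    calc Metric.infDist (c i') (C0' ∪ c '' {j | j < i'})
        ≤ dist (c i') (c i) := Metric.infDist_le_dist_of_mem hmem
      _ ≤ Δ := hd
      _ ≤ max R Δ := le_max_right _ _
  rcases a with _ | i <;> rcases b with _ | i'
  · exact hab rfl
  · exact mixed i' hfab
  · exact mixed i hfab.symm
  · have hne : i ≠ i' := fun h => hab (by rw [h])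
    rcases hne.lt_or_gt with h | h
    · exact pair i i' h hfab
    · exact pair i' i h hfab.symm
end

section
/- Let (S,d) be a finite metric space partitioned into two groups S_1, S_2, let k_1 ≤ |S_1| and k_2 ≤ |S_2| with k = k_1 + k_2 ≥ 1, let C0 ⊆ S, and let r*_fair be the optimal fair k-center cost. Suppose c̃_1, ..., c̃_k ∈ S are pairwise distinct and satisfy d(s, {c̃_1, ..., c̃_k} ∪ C0) ≤ 4 r*_fair for all s ∈ S. Let a be a closest-center assignment for c̃_1, ..., c̃_k and C0 with a(c̃_i) = c̃_i, and clusters L_i = a^{-1}(c̃_i). Suppose |{i : c̃_i ∈ S_1}| > k_1 and that L_i ⊆ S_1 for every i with c̃_i ∈ S_1. Let S' = ∪_{i : c̃_i ∈ S_1} L_i, let C0' = C0 ∪ {c̃_i : c̃_i ∈ S_2}, and let ĉ_1, ..., ĉ_{k_1} be a greedy sequence of length k_1 on S' with respect to C0'. Then every s ∈ S satisfies d(s, {ĉ_1, ..., ĉ_{k_1}} ∪ C0') ≤ 5 r*_fair. (Core of the paper's Theorem 1: the main branch of the two-group algorithm is a 5-approximation for fair k-center.) -/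
/-- core of Theorem 1 of the paper: the main branch of the two-group
algorithm is a 5-approximation for fair `k`-center. The two groups are `{x | G x = 0}`
and `{x | G x = 1}`. -/
theorem stmt4 {X : Type*} [MetricSpace X] [Fintype X] [Nonempty X]
    (G : X → Fin 2) (k1 k2 : ℕ)
    (hk1 : k1 ≤ Set.ncard {x | G x = 0}) (hk2 : k2 ≤ Set.ncard {x | G x = 1})
    (k : ℕ) (hk : k = k1 + k2) (hkpos : 1 ≤ k)
    (C0 : Set X)
    (rfair : ℝ)
    (hr : IsLeast {r : ℝ | ∃ C : Set X, (C ∩ {x | G x = 0}).ncard = k1 ∧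
        (C ∩ {x | G x = 1}).ncard = k2 ∧
        (C ∪ C0).Nonempty ∧ r = ⨆ s : X, Metric.infDist s (C ∪ C0)} rfair)
    (ct : Fin k → X) (hinj : Function.Injective ct)
    (hcov : ∀ s : X, Metric.infDist s (Set.range ct ∪ C0) ≤ 4 * rfair)
    (a : X → X)
    (ha1 : ∀ s, a s ∈ Set.range ct ∪ C0)
    (ha2 : ∀ s, dist s (a s) = Metric.infDist s (Set.range ct ∪ C0))
    (hafix : ∀ i, a (ct i) = ct i)
    (hcount : k1 < (Finset.univ.filter (fun i : Fin k => G (ct i) = 0)).card)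
    (hL1 : ∀ i, G (ct i) = 0 → ∀ s, a s = ct i → G s = 0)
    (S' : Set X) (hS'def : S' = {s | ∃ i, G (ct i) = 0 ∧ a s = ct i})
    (C0' : Set X) (hC0'def : C0' = C0 ∪ (Set.range ct ∩ {x | G x = 1}))
    (chat : Fin k1 → X) (hchat : IsGreedySeq S' C0' chat) :
    ∀ s : X, Metric.infDist s (Set.range chat ∪ C0') ≤ 5 * rfair := by
  classical
  obtain ⟨⟨Cstar, hC1, hC2, hCne, hreq⟩, -⟩ := hr
  have h01 : ∀ v : Fin 2, v = 0 ∨ v = 1 := by decide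
  have hbdd : ∀ q : X, Metric.infDist q (Cstar ∪ C0) ≤ rfair := by
    intro q
    rw [hreq]
    exact le_ciSup (Set.Finite.bddAbove (Set.finite_range (fun q : X => Metric.infDist q (Cstar ∪ C0)))) q
  have hrnn : 0 ≤ rfair := by
    obtain ⟨x0⟩ := ‹Nonempty X›
    exact le_trans Metric.infDist_nonneg (hbdd x0)
  have hC0sub : C0 ⊆ C0' := by rw [hC0'def]; exact Set.subset_union_left
  have hnear : ∀ q : X, ∃ c ∈ Cstar ∪ C0, dist q c ≤ rfair := by
    intro q
    obtain ⟨c, hc, hcd⟩ :=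
      ((Set.toFinite (Cstar ∪ C0)).isCompact).exists_infDist_eq_dist hCne q
    exact ⟨c, hc, hcd ▸ hbdd q⟩
  have hdista : ∀ q : X, dist q (a q) ≤ 4 * rfair := fun q => (ha2 q) ▸ hcov q
  have haC0' : ∀ c : X, G c = 1 → a c ∈ C0' := by
    intro c hc
    rcases ha1 c with ⟨j, hj⟩ | hmem
    · rcases h01 (G (ct j)) with h0 | h1
      · have := hL1 j h0 c hj.symm
        rw [this] at hc
        exact absurd hc (by decide)
      · rw [hC0'def]
        exact Or.inr ⟨⟨j, hj⟩, by rw [← hj]; exact h1⟩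
    · exact hC0sub hmem
  have hS'bound : ∀ s ∈ S', Metric.infDist s (Set.range chat ∪ C0') ≤ 5 * rfair := by
    intro s hs
    by_contra hlt
    push_neg at hlt
    set ρ := Metric.infDist s (Set.range chat ∪ C0') with hρdef
    set Q : Fin (k1 + 1) → X := fun i => if h : (i : ℕ) < k1 then chat ⟨i, h⟩ else s with hQ
    have hgreedy : ∀ (i : Fin k1) (t : X), t ∈ C0' ∪ chat '' {j | j < i} →
        ρ ≤ dist (chat i) t := by
      intro i t ht
      have hsub : C0' ∪ chat '' {j | j < i} ⊆ Set.range chat ∪ C0' := by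
        rintro x (hx | ⟨j, -, rfl⟩)
        · exact Or.inr hx
        · exact Or.inl ⟨j, rfl⟩
      calc ρ ≤ Metric.infDist s (C0' ∪ chat '' {j | j < i}) :=
            Metric.infDist_le_infDist_of_subset hsub ⟨t, ht⟩
        _ ≤ Metric.infDist (chat i) (C0' ∪ chat '' {j | j < i}) := hchat.2 i s hs
        _ ≤ dist (chat i) t := Metric.infDist_le_dist_of_mem ht
    have hfarC0 : ∀ i : Fin (k1 + 1), ∀ c ∈ C0', ρ ≤ dist (Q i) c := by
      intro i c hc
      simp only [hQ]
      split_ifs with h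
      · exact hgreedy _ c (Or.inl hc)
      · exact Metric.infDist_le_dist_of_mem (Or.inr hc)
    have key : ∀ i j : Fin (k1 + 1), (j : ℕ) < (i : ℕ) → ρ ≤ dist (Q i) (Q j) := by
      intro i j hij
      by_cases hi : (i : ℕ) < k1
      · have hj : (j : ℕ) < k1 := lt_trans hij hi
        have hQi : Q i = chat ⟨i, hi⟩ := dif_pos hi
        have hQj : Q j = chat ⟨j, hj⟩ := dif_pos hj
        rw [hQi, hQj]
        exact hgreedy ⟨i, hi⟩ _ (Or.inr ⟨⟨j, hj⟩, hij, rfl⟩)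
      · have hj : (j : ℕ) < k1 := by omega
        have hQi : Q i = s := dif_neg hi
        have hQj : Q j = chat ⟨j, hj⟩ := dif_pos hj
        rw [hQi, hQj]
        exact Metric.infDist_le_dist_of_mem (Or.inl ⟨⟨j, hj⟩, rfl⟩)
    have hpair : ∀ i j : Fin (k1 + 1), i ≠ j → ρ ≤ dist (Q i) (Q j) := by
      intro i j hne
      rcases lt_trichotomy (j : ℕ) (i : ℕ) with h | h | h
      · exact key i j h
      · exact absurd (Fin.ext h.symm) hne
      · rw [dist_comm]; exact key j i h
    have hcc : ∀ i : Fin (k1 + 1), ∃ c, c ∈ Cstar ∧ G c = 0 ∧ dist (Q i) c ≤ rfair := by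
      intro i
      obtain ⟨c, hcmem, hcd⟩ := hnear (Q i)
      rcases hcmem with hcC | hcC0
      · rcases h01 (G c) with h0 | h1
        · exact ⟨c, hcC, h0, hcd⟩
        · exfalso
          have h1' : ρ ≤ dist (Q i) (a c) := hfarC0 i _ (haC0' c h1)
          have h2' : dist (Q i) (a c) ≤ dist (Q i) c + dist c (a c) := dist_triangle _ _ _
          have h3' : dist c (a c) ≤ 4 * rfair := hdista c
          linarith
      · exfalso
        have := hfarC0 i c (hC0sub hcC0)
        linarith
    choose f hf1 hf2 hf3 using hcc
    have hinjf : Function.Injective f := by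
      intro i j hij
      by_contra hne
      have hρij : ρ ≤ dist (Q i) (Q j) := hpair i j hne
      have ht : dist (Q i) (Q j) ≤ dist (Q i) (f i) + dist (f i) (Q j) := dist_triangle _ _ _
      have heq : dist (f i) (Q j) = dist (Q j) (f j) := by rw [hij, dist_comm]
      have h1 := hf3 i
      have h2 := hf3 j
      linarith
    have hcard : k1 + 1 ≤ k1 := by
      have hsub2 : ∀ i, f i ∈ Cstar ∩ {x | G x = 0} := fun i => ⟨hf1 i, hf2 i⟩
      have h1 : (Finset.univ : Finset (Fin (k1 + 1))).card ≤
          (Cstar ∩ {x | G x = 0}).toFinset.card :=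
        Finset.card_le_card_of_injOn f (fun i _ => Set.mem_toFinset.2 (hsub2 i))
          (fun i _ j _ h => hinjf h)
      rw [← Set.ncard_eq_toFinset_card', hC1] at h1
      simp only [Finset.card_univ, Fintype.card_fin] at h1
      exact h1
    omega
  intro s
  rcases ha1 s with ⟨j, hj⟩ | hsC0
  · rcases h01 (G (ct j)) with h0 | h1
    · exact hS'bound s (by rw [hS'def]; exact ⟨j, h0, hj.symm⟩)
    · have hmem : a s ∈ C0' := by
        rw [hC0'def]
        exact Or.inr ⟨⟨j, hj⟩, by rw [← hj]; exact h1⟩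
      calc Metric.infDist s (Set.range chat ∪ C0') ≤ dist s (a s) :=
            Metric.infDist_le_dist_of_mem (Or.inr hmem)
        _ ≤ 4 * rfair := hdista s
        _ ≤ 5 * rfair := by linarith
  · calc Metric.infDist s (Set.range chat ∪ C0') ≤ dist s (a s) :=
          Metric.infDist_le_dist_of_mem (Or.inr (hC0sub hsC0))
      _ ≤ 4 * rfair := hdista s
      _ ≤ 5 * rfair := by linarith
end

section
/- For every ε > 0 there exist a finite metric space (S,d) partitioned into two groups S_1, S_2, integers k_1 ≤ |S_1| and k_2 ≤ |S_2| with k = k_1 + k_2, the set C0 = ∅, pairwise distinct points c̃_1, ..., c̃_k ∈ S with d(s, {c̃_1, ..., c̃_k}) ≤ 4 r*_fair for all s ∈ S, a closest-center assignment a for c̃_1, ..., c̃_k with a(c̃_i) = c̃_i and clusters L_i = a^{-1}(c̃_i) satisfying |{i : c̃_i ∈ S_1}| > k_1 and L_i ⊆ S_1 for every i with c̃_i ∈ S_1, and a greedy sequence ĉ_1, ..., ĉ_{k_1} of length k_1 on S' = ∪_{i : c̃_i ∈ S_1} L_i with respect to C0' = {c̃_i : c̃_i ∈ S_2}, such that r*_fair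 > 0 and some s ∈ S satisfies d(s, {ĉ_1, ..., ĉ_{k_1}} ∪ C0') ≥ (5 − ε) · r*_fair. (Lower-bound part of the paper's Theorem 1: the approximation factor 5 of the two-group algorithm cannot be improved to 5 − ε.) -/
def X6 : Type := Fin 6

instance : Fintype X6 := inferInstanceAs (Fintype (Fin 6))
instance : DecidableEq X6 := inferInstanceAs (DecidableEq (Fin 6))
instance : Nonempty X6 := inferInstanceAs (Nonempty (Fin 6))

def Dn : Fin 6 → Fin 6 → ℕ :=
  ![![0,20,20,20,20,20],
    ![20,0,1,4,4,5],
    ![20,1,0,5,5,6],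
    ![20,4,5,0,5,1],
    ![20,4,5,5,0,4],
    ![20,5,6,1,4,0]]

instance : MetricSpace X6 where
  dist a b := ((Dn a b : ℕ) : ℝ)
  dist_self a := by norm_num [show ∀ a : Fin 6, Dn a a = 0 from by decide]; exact (show ∀ a : Fin 6, Dn a a = 0 from by decide) a
  dist_comm a b := by
    have : ∀ a b : Fin 6, Dn a b = Dn b a := by decide
    norm_num [this a b]
  dist_triangle a b c := by
    have : ∀ a b c : Fin 6, Dn a c ≤ Dn a b + Dn b c := by decide
    have h := this a b c
    show ((Dn a c : ℕ) : ℝ) ≤ ((Dn a b : ℕ) : ℝ) + ((Dn b c : ℕ) : ℝ)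
    exact_mod_cast h
  eq_of_dist_eq_zero := by
    intro a b h
    have : ∀ a b : Fin 6, Dn a b = 0 → a = b := by decide
    have h' : ((Dn a b : ℕ) : ℝ) = 0 := h
    exact this a b (by exact_mod_cast h')

def pX : X6 := (0 : Fin 6)
def pV : X6 := (1 : Fin 6)
def pZ : X6 := (2 : Fin 6)
def pS : X6 := (3 : Fin 6)
def pW : X6 := (4 : Fin 6)
def pW2 : X6 := (5 : Fin 6)

def GG : X6 → Fin 2 := fun q => if (q : Fin 6).val ≤ 3 then 0 else 1
def ctF : Fin 4 → X6 := fun i => (![0,1,2,4] : Fin 4 → Fin 6) i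
def aF : X6 → X6 := fun q => (![0,1,2,1,4,4] : Fin 6 → Fin 6) q
def chatF : Fin 2 → X6 := fun i => (![0,2] : Fin 2 → Fin 6) i

lemma distv {a b : X6} {n : ℕ} (h : Dn a b = n) : dist a b = (n : ℝ) := by
  show ((Dn a b : ℕ) : ℝ) = n
  exact_mod_cast congrArg (Nat.cast : ℕ → ℝ) h

lemma dist_le_of {a b : X6} {n : ℕ} (h : Dn a b ≤ n) : dist a b ≤ (n : ℝ) := by
  show ((Dn a b : ℕ) : ℝ) ≤ n
  exact_mod_cast h

lemma le_dist_of {a b : X6} {n : ℕ} (h : n ≤ Dn a b) : (n : ℝ) ≤ dist a b := by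
  show (n : ℝ) ≤ ((Dn a b : ℕ) : ℝ)
  exact_mod_cast h

lemma dist_le_dist_of {a b c d : X6} (h : Dn a b ≤ Dn c d) : dist a b ≤ dist c d := by
  show ((Dn a b : ℕ) : ℝ) ≤ ((Dn c d : ℕ) : ℝ)
  exact_mod_cast h

lemma one_le_dist {q y : X6} (h : ¬ q = y) : (1:ℝ) ≤ dist q y := by
  have := le_dist_of ((show ∀ a b : Fin 6, ¬ a = b → 1 ≤ Dn a b from by decide) q y h)
  exact_mod_cast this

lemma le_infDist' {x : X6} {s : Set X6} (hs : s.Nonempty) {r : ℝ}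
    (h : ∀ y ∈ s, r ≤ dist x y) : r ≤ Metric.infDist x s := by
  by_contra hc
  push_neg at hc
  rw [Metric.infDist_lt_iff hs] at hc
  obtain ⟨y, hy, hlt⟩ := hc
  exact absurd (h y hy) (not_le.2 hlt)

lemma hG0 : {x : X6 | GG x = 0} = (({pX,pV,pZ,pS} : Finset X6) : Set X6) := by
  ext q; simp only [Set.mem_setOf_eq, Finset.coe_insert, Set.mem_insert_iff,
    Finset.coe_singleton, Set.mem_singleton_iff]
  revert q; decide

lemma hG1 : {x : X6 | GG x = 1} = (({pW,pW2} : Finset X6) : Set X6) := by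
  ext q; simp only [Set.mem_setOf_eq, Finset.coe_insert, Set.mem_insert_iff,
    Finset.coe_singleton, Set.mem_singleton_iff]
  revert q; decide

lemma hrct : Set.range ctF = (({pX,pV,pZ,pW} : Finset X6) : Set X6) := by
  ext q; simp only [Set.mem_range, Finset.coe_insert, Set.mem_insert_iff,
    Finset.coe_singleton, Set.mem_singleton_iff]
  revert q; decide

lemma hC0' : Set.range ctF ∩ {x : X6 | GG x = 1} = ({pW} : Set X6) := by
  ext q; simp only [Set.mem_inter_iff, Set.mem_range, Set.mem_setOf_eq,
    Set.mem_singleton_iff]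
  revert q; decide

lemma hrchat : Set.range chatF = ({pX, pZ} : Set X6) := by
  ext q; simp only [Set.mem_range, Set.mem_insert_iff, Set.mem_singleton_iff]
  revert q; decide


lemma hSp : ∀ q : X6, (∃ i, GG (ctF i) = 0 ∧ aF q = ctF i) ↔
    (q = pX ∨ q = pV ∨ q = pZ ∨ q = pS) := by decide

/-- the fair-optimal solution -/
def Copt : Set X6 := (({pX,pZ,pW,pW2} : Finset X6) : Set X6)

lemma hCopt_sup : (1:ℝ) = ⨆ s : X6, Metric.infDist s Copt := by
  have hne : Copt.Nonempty := ⟨pX, Finset.mem_coe.mpr (by decide)⟩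
  refine le_antisymm ?_ (ciSup_le fun q => ?_)
  · -- 1 ≤ iSup, witness pV
    have h1 : (1:ℝ) ≤ Metric.infDist pV Copt := by
      refine le_infDist' hne fun y hy => one_le_dist ?_
      exact (show ∀ y : X6, y ∈ ({pX,pZ,pW,pW2} : Finset X6) → ¬ pV = y from by decide) y
        (Finset.mem_coe.mp hy)
    exact h1.trans (le_ciSup (f := fun s : X6 => Metric.infDist s Copt)
      (Finite.bddAbove_range _) pV)
  · obtain ⟨y, hyF, hle⟩ :=
      (show ∀ q : Fin 6, ∃ y : Fin 6, y ∈ ({pX,pZ,pW,pW2} : Finset (Fin 6)) ∧ Dn q y ≤ 1 from by decide) q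
    have := (Metric.infDist_le_dist_of_mem (x := q) (Finset.mem_coe.mpr hyF)).trans
      (dist_le_of hle)
    exact_mod_cast this

/-- lower-bound part of Theorem 1 of the paper: the approximation factor
5 of the two-group algorithm cannot be improved to `5 - ε`. Here `C0 = ∅`, the two groups
are `{x | G x = 0}` and `{x | G x = 1}`, `S' = ⋃_{i : ct i ∈ S₁} L i` and
`C0' = {ct i | ct i ∈ S₂}`. -/
theorem stmt5 (ε : ℝ) (hε : 0 < ε) :
    ∃ (X : Type) (_ : MetricSpace X) (_ : Fintype X) (_ : Nonempty X)
      (G : X → Fin 2) (k1 k2 k : ℕ) (rfair : ℝ) (ct : Fin k → X)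
      (a : X → X) (chat : Fin k1 → X),
      k1 ≤ Set.ncard {x | G x = 0} ∧ k2 ≤ Set.ncard {x | G x = 1} ∧ k = k1 + k2 ∧
      IsLeast {r : ℝ | ∃ C : Set X, (C ∩ {x | G x = 0}).ncard = k1 ∧
          (C ∩ {x | G x = 1}).ncard = k2 ∧
          C.Nonempty ∧ r = ⨆ s : X, Metric.infDist s C} rfair ∧
      Function.Injective ct ∧
      (∀ s : X, Metric.infDist s (Set.range ct) ≤ 4 * rfair) ∧
      (∀ s, a s ∈ Set.range ct) ∧
      (∀ s, dist s (a s) = Metric.infDist s (Set.range ct)) ∧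
      (∀ i, a (ct i) = ct i) ∧
      k1 < (Finset.univ.filter (fun i : Fin k => G (ct i) = 0)).card ∧
      (∀ i, G (ct i) = 0 → ∀ s, a s = ct i → G s = 0) ∧
      IsGreedySeq {s | ∃ i, G (ct i) = 0 ∧ a s = ct i} (Set.range ct ∩ {x | G x = 1}) chat ∧
      0 < rfair ∧
      ∃ s : X, (5 - ε) * rfair ≤
        Metric.infDist s (Set.range chat ∪ (Set.range ct ∩ {x | G x = 1})) := by
  have hne_ct : (Set.range ctF).Nonempty := ⟨ctF 0, Set.mem_range_self 0⟩
  refine ⟨X6, inferInstance, inferInstance, inferInstance, GG, 2, 2, 4, 1, ctF, aF, chatF,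
    ?_, ?_, rfl, ⟨?_, ?_⟩, by decide, ?_, ?_, ?_, by decide, by decide, by decide, ⟨?_, ?_⟩,
    one_pos, ?_⟩
  · rw [hG0, Set.ncard_coe_finset]; decide
  · rw [hG1, Set.ncard_coe_finset]; decide
  · -- membership in IsLeast
    refine ⟨Copt, ?_, ?_, ⟨pX, Finset.mem_coe.mpr (by decide)⟩, hCopt_sup⟩
    · rw [hG0]
      show ((({pX,pZ,pW,pW2} : Finset X6) : Set X6) ∩ _).ncard = 2
      rw [← Finset.coe_inter, Set.ncard_coe_finset]
      decide
    · rw [hG1]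
      show ((({pX,pZ,pW,pW2} : Finset X6) : Set X6) ∩ _).ncard = 2
      rw [← Finset.coe_inter, Set.ncard_coe_finset]
      decide
  · -- lower bound of IsLeast
    rintro r ⟨C, hC0n, _hC1n, hCne, rfl⟩
    have hq : ∃ q : X6, q ∉ C := by
      by_contra h
      push_neg at h
      have hu : C = Set.univ := Set.eq_univ_of_forall h
      rw [hu, Set.univ_inter, hG0, Set.ncard_coe_finset] at hC0n
      exact absurd hC0n (by decide)
    obtain ⟨q, hq⟩ := hq
    have h1 : (1:ℝ) ≤ Metric.infDist q C :=
      le_infDist' hCne fun y hy => one_le_dist fun he => hq (he ▸ hy)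
    exact h1.trans (le_ciSup (f := fun s : X6 => Metric.infDist s C)
      (Finite.bddAbove_range _) q)
  · -- coverage
    intro q
    obtain ⟨y, hyF, hle⟩ :=
      (show ∀ q : Fin 6, ∃ y : Fin 6, y ∈ ({pX,pV,pZ,pW} : Finset (Fin 6)) ∧ Dn q y ≤ 4 from by decide) q
    have hmem : y ∈ Set.range ctF := by rw [hrct]; exact Finset.mem_coe.mpr hyF
    have := (Metric.infDist_le_dist_of_mem (x := q) hmem).trans (dist_le_of hle)
    rw [mul_one]
    exact_mod_cast this
  · -- a s ∈ range ct
    intro q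
    exact Set.mem_range.mpr ((show ∀ q : X6, ∃ i : Fin 4, ctF i = aF q from by decide) q)
  · -- dist s (a s) = infDist
    intro q
    refine le_antisymm (le_infDist' hne_ct fun y hy => ?_)
      (Metric.infDist_le_dist_of_mem
        (Set.mem_range.mpr ((show ∀ q : X6, ∃ i : Fin 4, ctF i = aF q from by decide) q)))
    obtain ⟨i, rfl⟩ := hy
    exact dist_le_dist_of ((show ∀ (q : X6) (i : Fin 4), Dn q (aF q) ≤ Dn q (ctF i)
      from by decide) q i)
  · -- greedy: membership
    intro i
    exact (show ∀ i : Fin 2, ∃ j, GG (ctF j) = 0 ∧ aF (chatF i) = ctF j from by decide) i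
  · -- greedy: maximality
    intro i q hq
    have hq' : q = pX ∨ q = pV ∨ q = pZ ∨ q = pS := (hSp q).mp hq
    fin_cases i
    · show Metric.infDist q (Set.range ctF ∩ {x | GG x = 1} ∪ chatF '' {j | j < (0 : Fin 2)}) ≤
        Metric.infDist (chatF 0) (Set.range ctF ∩ {x | GG x = 1} ∪ chatF '' {j | j < (0 : Fin 2)})
      have him : {j : Fin 2 | j < (0 : Fin 2)} = ∅ := by
        ext j; simp [Fin.lt_def]
      rw [him, Set.image_empty, Set.union_empty, hC0', Metric.infDist_singleton,
        Metric.infDist_singleton]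
      have : chatF 0 = pX := by decide
      rw [this]
      refine dist_le_dist_of ?_
      rcases hq' with rfl | rfl | rfl | rfl <;> decide
    · show Metric.infDist q (Set.range ctF ∩ {x | GG x = 1} ∪ chatF '' {j | j < (1 : Fin 2)}) ≤
        Metric.infDist (chatF 1) (Set.range ctF ∩ {x | GG x = 1} ∪ chatF '' {j | j < (1 : Fin 2)})
      have him : {j : Fin 2 | j < (1 : Fin 2)} = {(0 : Fin 2)} := by
        ext j; simp only [Set.mem_setOf_eq, Set.mem_singleton_iff]; revert j; decide
      rw [him, Set.image_singleton, hC0']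
      have hc0 : chatF 0 = pX := by decide
      have hc1 : chatF 1 = pZ := by decide
      rw [hc0, hc1]
      have hsetne : ({pW} ∪ {pX} : Set X6).Nonempty := ⟨pW, Or.inl rfl⟩
      have hval : Metric.infDist pZ ({pW} ∪ {pX} : Set X6) = 5 := by
        refine le_antisymm ?_ (le_infDist' hsetne fun y hy => ?_)
        · have : dist pZ pW = ((5:ℕ):ℝ) := distv (by decide)
          have h' := Metric.infDist_le_dist_of_mem
            (show pW ∈ ({pW} ∪ {pX} : Set X6) from Or.inl rfl) (x := pZ)
          rw [this] at h'
          exact_mod_cast h'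
        · rcases hy with hy | hy <;> rw [Set.mem_singleton_iff] at hy <;> subst hy
          · rw [distv (show Dn pZ pW = 5 from by decide)]; norm_num
          · rw [distv (show Dn pZ pX = 20 from by decide)]; norm_num
      rw [hval]
      have hor : Dn q pW ≤ 5 ∨ Dn q pX ≤ 5 := by
        rcases hq' with rfl | rfl | rfl | rfl <;> decide
      rcases hor with h | h
      · have := (Metric.infDist_le_dist_of_mem
          (show pW ∈ ({pW} ∪ {pX} : Set X6) from Or.inl rfl) (x := q)).trans (dist_le_of h)
        exact_mod_cast this
      · have := (Metric.infDist_le_dist_of_mem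
          (show pX ∈ ({pW} ∪ {pX} : Set X6) from Or.inr rfl) (x := q)).trans (dist_le_of h)
        exact_mod_cast this
  · -- final witness
    refine ⟨pS, ?_⟩
    rw [hrchat, hC0', mul_one]
    have hne : (({pX, pZ} : Set X6) ∪ {pW}).Nonempty := ⟨pW, Or.inr rfl⟩
    refine le_infDist' hne fun y hy => ?_
    have h5 : (5:ℝ) - ε ≤ 5 := by linarith
    rcases hy with hy | hy
    · rcases hy with hy | hy
      · subst hy; rw [distv (show Dn pS pX = 20 from by decide)]; push_cast; linarith
      · rw [Set.mem_singleton_iff] at hy; subst hy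
        rw [distv (show Dn pS pZ = 5 from by decide)]; push_cast; linarith
    · rw [Set.mem_singleton_iff] at hy; subst hy
      rw [distv (show Dn pS pW = 5 from by decide)]; push_cast; linarith
end

section
/- Let S be a finite set partitioned into groups S_1, ..., S_m and also partitioned into clusters L_1, ..., L_k with designated centers c_t ∈ L_t for t ∈ {1, ..., k}. Define a directed graph G on vertex set {1, ..., m} with an edge i → j if and only if there exists t with c_t ∈ S_i and L_t ∩ S_j ≠ ∅. Let k_1, ..., k_m ∈ ℕ with k_1 + ... + k_m = k, and set k̃_j = |{t : c_t ∈ S_j}| for each j. Assume k̃_j ≠ k_j for some j, and assume there is no directed path in G from any index r with k̃_r > k_r to any index s with k̃_s < k_s. Let 𝒢' = {j : k̃_j > k_j} and let 𝒢 = 𝒢' ∪ {j : some i ∈ 𝒢' has a directed path to j in G}. Then: (i) 𝒢 is a strict subset of {1, ..., m}; (ii) for every t such that c_t belongs to a group S_f with f ∈ 𝒢, one has L_t ⊆ ∪_{j ∈ 𝒢} S_j; and (iii) k̃_j ≤ k_j for every j ∉ 𝒢. (The correctness claim of the paper's Lemma 2 for the center-exchange routine, Algorithm 3.) -/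
/-- correctness claim of Lemma 2 of the paper for the center-exchange
routine. `S` is the finite type `X`, partitioned into groups `{x | Gr x = j}`, `j : Fin m`,
and into clusters `{x | cl x = t}`, `t : Fin k`, with designated centers `c t` (so
`cl (c t) = t`). The directed graph on group indices has an edge `i → j` iff some cluster
whose center is in group `i` contains an element of group `j`; directed paths (of length
zero allowed) are modeled by `Relation.ReflTransGen`. `kt j` is the number of cluster
centers in group `j`. If `kt ≠ kf` somewhere and no directed path leads from an index with
surplus (`kf r < kt r`) to an index with deficit (`kt s < kf s`), then the set `𝒢` of
indices reachable from a surplus index is a strict subset of the group indices, every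
cluster whose center belongs to a group in `𝒢` is contained in the union of the groups in
`𝒢`, and every group not in `𝒢` has at most its requested number of centers. -/
theorem stmt6 {X : Type*} [Fintype X] {m k : ℕ}
    (Gr : X → Fin m) (cl : X → Fin k) (c : Fin k → X)
    (hcenter : ∀ t, cl (c t) = t)
    (kf : Fin m → ℕ) (hsum : ∑ j, kf j = k)
    (kt : Fin m → ℕ)
    (hkt : ∀ j, kt j = (Finset.univ.filter (fun t : Fin k => Gr (c t) = j)).card)
    (edge : Fin m → Fin m → Prop)
    (hedge : ∀ i j, edge i j ↔ ∃ t, Gr (c t) = i ∧ ∃ x, cl x = t ∧ Gr x = j)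
    (hne : ∃ j, kt j ≠ kf j)
    (hnopath : ∀ r s, kf r < kt r → kt s < kf s → ¬ Relation.ReflTransGen edge r s)
    (𝒢 : Set (Fin m))
    (h𝒢 : 𝒢 = {j | ∃ i, kf i < kt i ∧ Relation.ReflTransGen edge i j}) :
    𝒢 ≠ Set.univ ∧
    (∀ t, Gr (c t) ∈ 𝒢 → ∀ x, cl x = t → Gr x ∈ 𝒢) ∧
    (∀ j ∉ 𝒢, kt j ≤ kf j) := by
  subst h𝒢
  have hsumkt : ∑ j, kt j = k := by
    simp only [hkt]
    rw [← Finset.card_eq_sum_card_fiberwise (fun t _ => Finset.mem_univ (Gr (c t)))]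
    simp
  refine ⟨?_, ?_, ?_⟩
  · intro huniv
    -- no deficit exists
    have hnodef : ∀ j, kf j ≤ kt j := by
      intro j
      by_contra h
      push_neg at h
      have hj : j ∈ Set.univ := Set.mem_univ j
      rw [← huniv] at hj
      obtain ⟨i, hi, hpath⟩ := hj
      exact hnopath i j hi h hpath
    obtain ⟨j, hj⟩ := hne
    have : ∀ i ∈ Finset.univ, kf i = kt i := by
      have := (Finset.sum_eq_sum_iff_of_le (fun i _ => hnodef i)).mp
        (by rw [hsum, hsumkt])
      intro i hi; exact this i hi
    exact hj ((this j (Finset.mem_univ j)).symm)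
  · rintro t ⟨i, hi, hpath⟩ x hx
    refine ⟨i, hi, hpath.tail ?_⟩
    rw [hedge]
    exact ⟨t, rfl, x, hx, rfl⟩
  · intro j hj
    by_contra h
    push_neg at h
    exact hj ⟨j, h, Relation.ReflTransGen.refl⟩
end

section
/- Let S be a finite set partitioned into groups S_1, ..., S_m and also partitioned into clusters L_1, ..., L_k with designated centers c_t ∈ L_t. Let w ≥ 1, let v_0, v_1, ..., v_w ∈ {1, ..., m} be pairwise distinct group indices, and for each l ∈ {0, ..., w−1} let t_l ∈ {1, ..., k} and y_l ∈ S be such that c_{t_l} ∈ S_{v_l} and y_l ∈ L_{t_l} ∩ S_{v_{l+1}} (note the t_l are then pairwise distinct, since each cluster's center lies in exactly one group). Define new centers by c'_t = y_l if t = t_l for some l, and c'_t = c_t otherwise, and set k̃_j = |{t : c_t ∈ S_j}| and k̃'_j = |{t : c'_t ∈ S_j}|. Then k̃'_{v_0} = k̃_{v_0} − 1, k̃'_{v_w} = k̃_{v_w} + 1, and k̃'_j = k̃_j for every j ∉ {v_0, v_w}. (The effect on group counts of performing the chain of center swaps along a shortest path, as in the while-loop of the paper's Algorithm 3.) -/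
/-- effect on group counts of the chain of center swaps along a shortest
path, as in the while-loop of Algorithm 3 of the paper. `S` is the finite type `X`,
partitioned into groups `{x | Gr x = j}`, `j : Fin m`, and into clusters `{x | cl x = t}`,
`t : Fin k`, with designated centers `c t` (so `cl (c t) = t`). Along pairwise distinct
group indices `v 0, ..., v w`, the center `c (t l)` of cluster `t l` lies in group
`v l` and is swapped for the element `y l` of its cluster lying in group `v (l+1)`.
Then group `v 0` loses one center, group `v w` gains one, and all other counts are
unchanged. -/
theorem stmt7 {X : Type*} [Fintype X] {m k : ℕ}
    (Gr : X → Fin m) (cl : X → Fin k) (c : Fin k → X)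
    (hcenter : ∀ t, cl (c t) = t)
    (w : ℕ) (hw : 1 ≤ w)
    (v : Fin (w + 1) → Fin m) (hv : Function.Injective v)
    (t : Fin w → Fin k) (y : Fin w → X)
    (hct : ∀ l, Gr (c (t l)) = v l.castSucc)
    (hy1 : ∀ l, cl (y l) = t l)
    (hy2 : ∀ l, Gr (y l) = v l.succ)
    (c' : Fin k → X)
    (hc'1 : ∀ l, c' (t l) = y l)
    (hc'2 : ∀ u : Fin k, (∀ l, t l ≠ u) → c' u = c u)
    (kt kt' : Fin m → ℕ)
    (hkt : ∀ j, kt j = (Finset.univ.filter (fun u : Fin k => Gr (c u) = j)).card)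
    (hkt' : ∀ j, kt' j = (Finset.univ.filter (fun u : Fin k => Gr (c' u) = j)).card) :
    kt' (v 0) + 1 = kt (v 0) ∧
    kt' (v (Fin.last w)) = kt (v (Fin.last w)) + 1 ∧
    ∀ j, j ≠ v 0 → j ≠ v (Fin.last w) → kt' j = kt j := by
  classical
  have htinj : Function.Injective t := by
    intro a b hab
    have h1 := hct a
    rw [hab, hct b] at h1
    exact (Fin.castSucc_injective _ (hv h1)).symm
  set T : Finset (Fin k) := Finset.image t Finset.univ with hT
  -- cardinal of filter for an injective function
  have hcard1 : ∀ (f : Fin w → Fin m), Function.Injective f → ∀ j : Fin m,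
      (Finset.univ.filter (fun l => f l = j)).card
        = if ∃ l, f l = j then 1 else 0 := by
    intro f hf j
    split_ifs with h
    · obtain ⟨l, hl⟩ := h
      rw [Finset.card_eq_one]
      refine ⟨l, ?_⟩
      ext x
      simp only [Finset.mem_filter, Finset.mem_univ, true_and, Finset.mem_singleton]
      constructor
      · intro hx; exact hf (hx.trans hl.symm)
      · rintro rfl; exact hl
    · rw [Finset.card_eq_zero, Finset.filter_eq_empty_iff]
      push_neg at h
      intro x _; exact h x
  have hvc : Function.Injective (fun l : Fin w => v l.castSucc) :=
    fun a b hab => Fin.castSucc_injective _ (hv hab)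
  have hvs : Function.Injective (fun l : Fin w => v l.succ) :=
    fun a b hab => Fin.succ_injective _ (hv hab)
  -- the parts inside T
  have keyc : ∀ j, Finset.univ.filter (fun u : Fin k => Gr (c u) = j) ∩ T
      = Finset.image t (Finset.univ.filter (fun l => v l.castSucc = j)) := by
    intro j; ext u
    simp only [Finset.mem_inter, Finset.mem_filter, Finset.mem_univ, true_and, hT,
      Finset.mem_image]
    constructor
    · rintro ⟨hj, l, rfl⟩
      exact ⟨l, by rw [hct] at hj; exact hj, rfl⟩
    · rintro ⟨l, hl, rfl⟩
      exact ⟨by rw [hct]; exact hl, l, rfl⟩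
  have keyc' : ∀ j, Finset.univ.filter (fun u : Fin k => Gr (c' u) = j) ∩ T
      = Finset.image t (Finset.univ.filter (fun l => v l.succ = j)) := by
    intro j; ext u
    simp only [Finset.mem_inter, Finset.mem_filter, Finset.mem_univ, true_and, hT,
      Finset.mem_image]
    constructor
    · rintro ⟨hj, l, rfl⟩
      rw [hc'1, hy2] at hj
      exact ⟨l, hj, rfl⟩
    · rintro ⟨l, hl, rfl⟩
      exact ⟨by rw [hc'1, hy2]; exact hl, l, rfl⟩
  -- the parts outside T coincide
  have hD : ∀ j, Finset.univ.filter (fun u : Fin k => Gr (c' u) = j) \ T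
      = Finset.univ.filter (fun u : Fin k => Gr (c u) = j) \ T := by
    intro j; ext u
    simp only [Finset.mem_sdiff, Finset.mem_filter, Finset.mem_univ, true_and, hT,
      Finset.mem_image, not_exists]
    have : (¬ ∃ a ∈ Finset.univ, t a = u) → c' u = c u := by
      intro h; push_neg at h
      exact hc'2 u (fun l => h l (Finset.mem_univ l))
    constructor
    · rintro ⟨h1, h2⟩
      refine ⟨?_, h2⟩
      rw [← this (by push_neg; intro a _; exact h2 a)]; exact h1
    · rintro ⟨h1, h2⟩
      refine ⟨?_, h2⟩
      rw [this (by push_neg; intro a _; exact h2 a)]; exact h1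
  set N : Fin m → ℕ := fun j => if ∃ l : Fin w, v l.castSucc = j then 1 else 0 with hN
  set N' : Fin m → ℕ := fun j => if ∃ l : Fin w, v l.succ = j then 1 else 0 with hN'
  set D : Fin m → ℕ :=
    fun j => (Finset.univ.filter (fun u : Fin k => Gr (c u) = j) \ T).card with hDdef
  have hktD : ∀ j, kt j = N j + D j := by
    intro j
    rw [hkt j, ← Finset.card_inter_add_card_sdiff _ T, keyc j,
      Finset.card_image_of_injective _ htinj, hcard1 _ hvc]
  have hkt'D : ∀ j, kt' j = N' j + D j := by
    intro j
    rw [hkt' j, ← Finset.card_inter_add_card_sdiff _ T, keyc' j,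
      Finset.card_image_of_injective _ htinj, hcard1 _ hvs, hD j]
  refine ⟨?_, ?_, ?_⟩
  · rw [hktD, hkt'D]
    have h1 : N (v 0) = 1 := by
      rw [hN]
      simp only [if_pos]
      exact if_pos ⟨⟨0, hw⟩, by congr 1⟩
    have h2 : N' (v 0) = 0 := by
      rw [hN']
      refine if_neg ?_
      rintro ⟨l, hl⟩
      exact Fin.succ_ne_zero l (hv hl)
    rw [h1, h2]
    omega
  · rw [hktD, hkt'D]
    have h1 : N (v (Fin.last w)) = 0 := by
      rw [hN]
      refine if_neg ?_
      rintro ⟨l, hl⟩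
      exact Fin.ne_last_of_lt (Fin.castSucc_lt_last l) (hv hl)
    have h2 : N' (v (Fin.last w)) = 1 := by
      rw [hN']
      refine if_pos ⟨⟨w - 1, by omega⟩, ?_⟩
      congr 1
      ext
      simp [Fin.succ]
      omega
    rw [h1, h2]
    omega
  · intro j hj0 hjl
    rw [hktD, hkt'D]
    have hiff : (∃ l : Fin w, v l.castSucc = j) ↔ (∃ l : Fin w, v l.succ = j) := by
      constructor
      · rintro ⟨l, hl⟩
        have h0 : l.castSucc ≠ 0 := by
          intro h; apply hj0; rw [← hl, h]
        refine ⟨(l.castSucc).pred h0, ?_⟩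
        rw [Fin.succ_pred]; exact hl
      · rintro ⟨l, hl⟩
        have h0 : l.succ ≠ Fin.last w := by
          intro h; apply hjl; rw [← hl, h]
        refine ⟨(l.succ).castPred h0, ?_⟩
        rw [Fin.castSucc_castPred]; exact hl
    have : N j = N' j := by
      rw [hN, hN']
      simp only [hiff]
    rw [this]
end

section
/- Let (S,d) be a finite metric space partitioned into groups S_1, ..., S_m, let k_1, ..., k_m ∈ ℕ with k_i ≤ |S_i|, let C0 ⊆ S, let r*_fair be the optimal fair k-center cost, and let C* be an optimal fair solution (|C* ∩ S_i| = k_i for all i and max_{s∈S} d(s, C* ∪ C0) ≤ r*_fair). Let 𝒢 ⊆ {1, ..., m}, let D ⊆ S with C0 ⊆ D, let ρ ≥ 0, and let T ⊆ S be nonempty such that: (a) T ⊆ (∪_{i ∈ 𝒢} S_i) ∪ D; and (b) every s ∈ (S \ T) ∪ D satisfies d(s, D) ≤ ρ. Let k̃ = Σ_{i ∈ 𝒢} k_i and let f_1, ..., f_{k̃} be a greedy sequence of length k̃ on T with respect to D. Then every s ∈ T satisfies d(s, D ∪ {f_1, ..., f_{k̃}}) ≤ max(ρ + r*_fair, 2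 r*_fair). (The inductive-step inequality in the proof of the paper's Theorem 2 for the multi-group algorithm.) -/
/-- the inductive-step inequality in the proof of Theorem 2 of the paper
for the multi-group algorithm. The groups are `{x | G x = i}`, `i : Fin m`; `rfair` is the
optimal fair `k`-center cost and `Cstar` an optimal fair solution. The hypothesis `hwd`
records the implicit well-definedness requirement of hypothesis (b): whenever there is a
point `s ∈ (S \ T) ∪ D`, the distance `d(s, D)` must be well defined, i.e. `D ≠ ∅`. -/
theorem stmt8 {X : Type*} [MetricSpace X] [Fintype X] [Nonempty X] {m : ℕ}
    (G : X → Fin m) (kf : Fin m → ℕ)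
    (hkf : ∀ i, kf i ≤ Set.ncard {x | G x = i})
    (C0 : Set X)
    (rfair : ℝ)
    (hr : IsLeast {r : ℝ | ∃ C : Set X, (∀ i, (C ∩ {x | G x = i}).ncard = kf i) ∧
        (C ∪ C0).Nonempty ∧ r = ⨆ s : X, Metric.infDist s (C ∪ C0)} rfair)
    (Cstar : Set X)
    (hCstar1 : ∀ i, (Cstar ∩ {x | G x = i}).ncard = kf i)
    (hCstar2 : ∀ s : X, Metric.infDist s (Cstar ∪ C0) ≤ rfair)
    (𝒢 : Finset (Fin m)) (D : Set X) (hC0D : C0 ⊆ D)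
    (ρ : ℝ) (hρ : 0 ≤ ρ)
    (T : Set X) (hT : T.Nonempty)
    (ha : T ⊆ (⋃ i ∈ 𝒢, {x | G x = i}) ∪ D)
    (hwd : (Tᶜ ∪ D).Nonempty → D.Nonempty)
    (hb : ∀ s ∈ Tᶜ ∪ D, Metric.infDist s D ≤ ρ)
    (ktil : ℕ) (hktil : ktil = ∑ i ∈ 𝒢, kf i)
    (f : Fin ktil → X) (hf : IsGreedySeq T D f) :
    ∀ s ∈ T, Metric.infDist s (D ∪ Set.range f) ≤ max (ρ + rfair) (2 * rfair) := by
  classical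
  intro s hs
  set R := max (ρ + rfair) (2 * rfair) with hRdef
  by_contra hcon
  rw [not_le] at hcon
  -- basic facts about rfair
  obtain ⟨C, hC1, hCne, hCr⟩ := hr.1
  have hrf0 : 0 ≤ rfair := by
    obtain ⟨x0⟩ := (inferInstance : Nonempty X)
    have h1 : Metric.infDist x0 (C ∪ C0) ≤ ⨆ s : X, Metric.infDist s (C ∪ C0) :=
      le_ciSup (f := fun s : X => Metric.infDist s (C ∪ C0))
        (Set.Finite.bddAbove (Set.finite_range _)) x0
    have h2 : (0:ℝ) ≤ Metric.infDist x0 (C ∪ C0) := Metric.infDist_nonneg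
    rw [hCr]
    linarith
  have hrfR : rfair ≤ R := le_trans (by linarith) (le_max_right _ _)
  have h2R : 2 * rfair ≤ R := le_max_right _ _
  have hρR : ρ + rfair ≤ R := le_max_left _ _
  have hCsne : (Cstar ∪ C0).Nonempty := by
    obtain ⟨x, hx⟩ := hCne
    cases hx with
    | inl hxC =>
      have h1 : 0 < (C ∩ {x' | G x' = G x}).ncard := by
        rw [Set.ncard_pos (Set.toFinite _)]
        exact ⟨x, hxC, rfl⟩
      have h2 : 0 < (Cstar ∩ {x' | G x' = G x}).ncard := by
        rw [hCstar1]; rw [hC1] at h1; exact h1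
      rw [Set.ncard_pos (Set.toFinite _)] at h2
      obtain ⟨y, hy⟩ := h2
      exact ⟨y, Or.inl hy.1⟩
    | inr hxC0 => exact ⟨x, Or.inr hxC0⟩
  -- the sequence of k+1 far-apart points
  set p : Fin (ktil + 1) → X := Fin.snoc f s with hp
  have claim1 : ∀ j : Fin (ktil + 1), ∀ x ∈ D ∪ f '' {i : Fin ktil | i.castSucc < j},
      R < dist (p j) x := by
    intro j x hx
    have hne : (D ∪ f '' {i : Fin ktil | i.castSucc < j}).Nonempty := ⟨x, hx⟩
    have hsub : (D ∪ f '' {i : Fin ktil | i.castSucc < j}) ⊆ D ∪ Set.range f :=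
      Set.union_subset_union_right D (Set.image_subset_range f _)
    have key : R < Metric.infDist (p j) (D ∪ f '' {i : Fin ktil | i.castSucc < j}) := by
      rcases Fin.eq_castSucc_or_eq_last j with ⟨i, rfl⟩ | rfl
      · have hset : {i' : Fin ktil | i'.castSucc < i.castSucc} = {j' | j' < i} := by
          ext i'; simp [Fin.castSucc_lt_castSucc_iff]
        have hpe : p i.castSucc = f i := by simp [hp]
        have h1 : Metric.infDist s (D ∪ f '' {j' | j' < i}) ≤
            Metric.infDist (f i) (D ∪ f '' {j' | j' < i}) := hf.2 i s hs
        have h2 : Metric.infDist s (D ∪ Set.range f) ≤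
            Metric.infDist s (D ∪ f '' {i' : Fin ktil | i'.castSucc < i.castSucc}) :=
          Metric.infDist_le_infDist_of_subset hsub hne
        rw [hpe, hset]
        rw [hset] at h2
        linarith
      · have hset : (D ∪ f '' {i : Fin ktil | i.castSucc < Fin.last ktil}) = D ∪ Set.range f := by
          congr 1
          ext y
          constructor
          · rintro ⟨i, -, rfl⟩; exact ⟨i, rfl⟩
          · rintro ⟨i, rfl⟩; exact ⟨i, Fin.castSucc_lt_last i, rfl⟩
        rw [hset]
        have hpe : p (Fin.last ktil) = s := by simp [hp]
        rw [hpe]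
        exact hcon
    exact lt_of_lt_of_le key (Metric.infDist_le_dist_of_mem hx)
  have claimD : ∀ j : Fin (ktil + 1), ∀ x ∈ D, R < dist (p j) x :=
    fun j x hx => claim1 j x (Or.inl hx)
  have claim2 : ∀ i j : Fin (ktil + 1), i < j → R < dist (p j) (p i) := by
    intro i j hij
    rcases Fin.eq_castSucc_or_eq_last i with ⟨i', rfl⟩ | rfl
    · exact claim1 j (p i'.castSucc)
        (Or.inr ⟨i', hij, by simp [hp]⟩)
    · exact absurd hij (Fin.le_last j).not_gt
  -- each point has a nearby optimal center in a group of 𝒢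
  have hcent : ∀ j : Fin (ktil + 1), ∃ c, (c ∈ Cstar ∧ G c ∈ 𝒢) ∧ dist (p j) c ≤ rfair := by
    intro j
    obtain ⟨c, hcmem, hceq⟩ :=
      ((Set.toFinite (Cstar ∪ C0)).isCompact).exists_infDist_eq_dist hCsne (p j)
    have hdc : dist (p j) c ≤ rfair := by rw [← hceq]; exact hCstar2 (p j)
    have hcD : c ∉ D := by
      intro hcD
      have := claimD j c hcD
      linarith
    have hcC : c ∈ Cstar := hcmem.resolve_right (fun h => hcD (hC0D h))
    have hcT : c ∈ T := by
      by_contra hcT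
      have hmem : c ∈ Tᶜ ∪ D := Or.inl hcT
      have h1 : Metric.infDist c D ≤ ρ := hb c hmem
      have hDne : D.Nonempty := hwd ⟨c, hmem⟩
      obtain ⟨d, hdD, hdeq⟩ := ((Set.toFinite D).isCompact).exists_infDist_eq_dist hDne c
      have h2 : dist c d ≤ ρ := by rw [← hdeq]; exact h1
      have h3 := claimD j d hdD
      have h4 : dist (p j) d ≤ dist (p j) c + dist c d := dist_triangle _ _ _
      linarith
    have hG : G c ∈ 𝒢 := by
      rcases ha hcT with h | h
      · simp only [Set.mem_iUnion, Set.mem_setOf_eq] at h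
        obtain ⟨i, hi, hGi⟩ := h
        rw [hGi]; exact hi
      · exact absurd h hcD
    exact ⟨c, ⟨hcC, hG⟩, hdc⟩
  choose c hc1 hc2 using hcent
  -- the set of available centers has cardinality ktil
  set A : Set X := Cstar ∩ {x | G x ∈ 𝒢} with hAdef
  have hAcard : A.ncard = ktil := by
    have hA : (Set.toFinite A).toFinset =
        𝒢.biUnion (fun i => (Set.toFinite (Cstar ∩ {x | G x = i})).toFinset) := by
      ext x
      simp only [Set.Finite.mem_toFinset, Finset.mem_biUnion, hAdef,
        Set.mem_inter_iff, Set.mem_setOf_eq]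
      constructor
      · rintro ⟨h1, h2⟩; exact ⟨G x, h2, h1, rfl⟩
      · rintro ⟨i, hi, h1, rfl⟩; exact ⟨h1, hi⟩
    have hdisj : ∀ i ∈ 𝒢, ∀ j ∈ 𝒢, i ≠ j →
        Disjoint ((Set.toFinite (Cstar ∩ {x | G x = i})).toFinset)
          ((Set.toFinite (Cstar ∩ {x | G x = j})).toFinset) := by
      intro i _ j _ hij
      rw [Finset.disjoint_left]
      intro x hxi hxj
      rw [Set.Finite.mem_toFinset] at hxi hxj
      exact hij (hxi.2 ▸ hxj.2 ▸ rfl)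
    rw [Set.ncard_eq_toFinset_card _ (Set.toFinite A), hA, Finset.card_biUnion hdisj, hktil]
    refine Finset.sum_congr rfl (fun i _ => ?_)
    rw [← Set.ncard_eq_toFinset_card _ (Set.toFinite _), hCstar1]
  -- pigeonhole
  have hmap : ∀ j : Fin (ktil + 1), c j ∈ (Set.toFinite A).toFinset := by
    intro j
    rw [Set.Finite.mem_toFinset]
    exact ⟨(hc1 j).1, (hc1 j).2⟩
  have hcardlt : (Set.toFinite A).toFinset.card < (Finset.univ : Finset (Fin (ktil + 1))).card := by
    rw [← Set.ncard_eq_toFinset_card _ (Set.toFinite A), hAcard]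
    simp
  obtain ⟨i, -, j, -, hij, hcij⟩ :=
    Finset.exists_ne_map_eq_of_card_lt_of_maps_to hcardlt (fun j _ => hmap j)
  have hfinal : ∀ i j : Fin (ktil + 1), i < j → c i = c j → False := by
    intro i j hlt hceq
    have h1 := claim2 i j hlt
    have h2 := hc2 i
    have h3 := hc2 j
    have h4 : dist (p j) (p i) ≤ dist (p j) (c j) + dist (c j) (p i) := dist_triangle _ _ _
    have h5 : dist (c j) (p i) = dist (p i) (c i) := by rw [← hceq, dist_comm]
    linarith
  rcases lt_or_gt_of_ne hij with h | h
  · exact hfinal i j h hcij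
  · exact hfinal j i h hcij.symm
end

section
/- Let (S,d) be a finite metric space partitioned into groups S_1, ..., S_m, let k_1, ..., k_m ∈ ℕ with k_i ≤ |S_i| for each i, let k = k_1 + ... + k_m ≥ 1, let C0 ⊆ S, and let r*_fair be the optimal fair k-center cost. Let c̃_1, ..., c̃_k be a greedy sequence of length k on S with respect to C0 whose entries are pairwise distinct, let a be a closest-center assignment for c̃_1, ..., c̃_k and C0 with clusters L_i = a^{-1}(c̃_i), and for each i ∈ {1, ..., k} let y_i be any element of L_i ∪ {c̃_i}. Then every s ∈ S satisfies d(s, {y_1, ..., y_k} ∪ C0) ≤ 4 r*_fair. (Base case of the inductive bound in the proof of the paper's Theorem 2: running the greedy strategy and then exchanging each center for an arbitrary element of its cluster yields covering radius at most 4 r*_fair.) -/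
/-- base case of the inductive bound in the proof of Theorem 2 of the
paper: running the greedy strategy on a finite metric space partitioned into groups
`{x | G x = i}` and then exchanging each center `c i` for an arbitrary element `y i` of its
cluster `L i = {s | a s = c i}` (or keeping `c i`) yields covering radius at most
`4 * r*_fair`, where `r*_fair` is the optimal fair `k`-center cost. -/
theorem stmt10 {X : Type*} [MetricSpace X] [Fintype X] [Nonempty X] {m : ℕ}
    (G : X → Fin m) (kf : Fin m → ℕ)
    (hkf : ∀ i, kf i ≤ Set.ncard {x | G x = i})
    (k : ℕ) (hk : k = ∑ i, kf i) (hkpos : 1 ≤ k)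
    (C0 : Set X)
    (rfair : ℝ)
    (hr : IsLeast {r : ℝ | ∃ C : Set X, (∀ i, (C ∩ {x | G x = i}).ncard = kf i) ∧
        (C ∪ C0).Nonempty ∧ r = ⨆ s : X, Metric.infDist s (C ∪ C0)} rfair)
    (c : Fin k → X) (hgreedy : IsGreedySeq Set.univ C0 c) (hinj : Function.Injective c)
    (a : X → X)
    (ha1 : ∀ s, a s ∈ Set.range c ∪ C0)
    (ha2 : ∀ s, dist s (a s) = Metric.infDist s (Set.range c ∪ C0))
    (y : Fin k → X)
    (hy : ∀ i, y i ∈ {s | a s = c i} ∪ {c i}) :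
    ∀ s : X, Metric.infDist s (Set.range y ∪ C0) ≤ 4 * rfair := by
  classical
  obtain ⟨C, hC1, hCne, hrdef⟩ := hr.1
  -- rfair bounds infDist to the optimal centers
  have hbdd : BddAbove (Set.range fun s : X => Metric.infDist s (C ∪ C0)) :=
    (Set.finite_range _).bddAbove
  have hrub : ∀ p : X, Metric.infDist p (C ∪ C0) ≤ rfair := by
    intro p; rw [hrdef]; exact le_ciSup hbdd p
  have hr0 : 0 ≤ rfair :=
    le_trans Metric.infDist_nonneg (hrub (Classical.arbitrary X))
  -- |C| = k
  have hCcard : C.ncard = k := by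
    have h1 : C.toFinset.card = ∑ i : Fin m, (C.toFinset.filter fun x => G x = i).card :=
      Finset.card_eq_sum_card_fiberwise (fun x _ => Finset.mem_univ (G x))
    have h2 : ∀ i : Fin m, (C.toFinset.filter fun x => G x = i).card
        = (C ∩ {x | G x = i}).ncard := by
      intro i
      rw [Set.ncard_eq_toFinset_card']
      congr 1
      ext x
      simp [Set.mem_toFinset]
    rw [Set.ncard_eq_toFinset_card', h1, hk]
    exact Finset.sum_congr rfl fun i _ => by rw [h2 i, hC1 i]
  -- Key: greedy covering radius is at most 2 * rfair
  have gcov : ∀ s : X, Metric.infDist s (Set.range c ∪ C0) ≤ 2 * rfair := by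
    intro s
    set rg := Metric.infDist s (Set.range c ∪ C0) with hrg
    -- distances from greedy centers to earlier centers and C0 are ≥ rg
    have hA : ∀ i : Fin k, ∀ x ∈ C0 ∪ c '' {j | j < i}, rg ≤ dist (c i) x := by
      intro i x hx
      have hsub : C0 ∪ c '' {j | j < i} ⊆ Set.range c ∪ C0 := by
        rintro z (hz | ⟨j, _, rfl⟩)
        · exact Or.inr hz
        · exact Or.inl ⟨j, rfl⟩
      calc rg ≤ Metric.infDist s (C0 ∪ c '' {j | j < i}) :=
            Metric.infDist_le_infDist_of_subset hsub ⟨x, hx⟩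
        _ ≤ Metric.infDist (c i) (C0 ∪ c '' {j | j < i}) :=
            hgreedy.2 i s (Set.mem_univ s)
        _ ≤ dist (c i) x := Metric.infDist_le_dist_of_mem hx
    -- the k+1 points
    set p : Option (Fin k) → X := fun u => u.elim s c with hp
    have hB : ∀ u v, u ≠ v → rg ≤ dist (p u) (p v) := by
      rintro (_ | i) (_ | j) huv
      · exact absurd rfl huv
      · exact Metric.infDist_le_dist_of_mem (Or.inl ⟨j, rfl⟩)
      · rw [dist_comm]
        exact Metric.infDist_le_dist_of_mem (Or.inl ⟨i, rfl⟩)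
      · have hij : i ≠ j := fun h => huv (by rw [h])
        rcases lt_or_gt_of_ne hij with h | h
        · rw [dist_comm]
          exact hA j _ (Or.inr ⟨i, h, rfl⟩)
        · exact hA i _ (Or.inr ⟨j, h, rfl⟩)
    have hCfin : (C ∪ C0).Finite := Set.toFinite _
    have hz : ∀ u : Option (Fin k), ∃ w ∈ C ∪ C0, dist (p u) w ≤ rfair := by
      intro u
      obtain ⟨w, hw, hdw⟩ := hCfin.isCompact.exists_infDist_eq_dist hCne (p u)
      exact ⟨w, hw, by rw [← hdw]; exact hrub (p u)⟩
    choose z hz1 hz2 using hz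
    by_cases hcase : ∃ u, z u ∈ C0
    · -- some point is close to an initial center: rg ≤ rfair
      obtain ⟨u, hu⟩ := hcase
      have h1 : rg ≤ dist (p u) (z u) := by
        cases u with
        | none => exact Metric.infDist_le_dist_of_mem (Or.inr hu)
        | some i => exact hA i _ (Or.inl hu)
      nlinarith [hz2 u]
    · -- all chosen centers lie in C: pigeonhole
      push_neg at hcase
      have hzC : ∀ u, z u ∈ C := fun u => (hz1 u).resolve_right (hcase u)
      have hcard : Fintype.card (↥C.toFinset) < Fintype.card (Option (Fin k)) := by
        rw [Fintype.card_option, Fintype.card_fin, Fintype.card_coe,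
          ← Set.ncard_eq_toFinset_card', hCcard]
        omega
      obtain ⟨u, v, huv, heq⟩ := Fintype.exists_ne_map_eq_of_card_lt
        (fun u : Option (Fin k) => (⟨z u, Set.mem_toFinset.2 (hzC u)⟩ : ↥C.toFinset)) hcard
      have hzz : z u = z v := congrArg Subtype.val heq
      have := hB u v huv
      have h1 := hz2 u
      have h2 := hz2 v
      have htri : dist (p u) (p v) ≤ dist (p u) (z u) + dist (z v) (p v) := by
        rw [hzz]; exact dist_triangle _ _ _
      rw [dist_comm (z v) (p v)] at htri
      linarith
  -- Now the exchange argument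
  intro s
  rcases ha1 s with ⟨i, hci⟩ | hC0
  · -- a s = c i
    have hsyi : Metric.infDist s (Set.range y ∪ C0) ≤ dist s (y i) :=
      Metric.infDist_le_dist_of_mem (Or.inl ⟨i, rfl⟩)
    have h1 : dist s (c i) ≤ 2 * rfair := by
      rw [hci, ha2 s]; exact gcov s
    have h2 : dist (c i) (y i) ≤ 2 * rfair := by
      rcases hy i with hyi | hyi
      · have : a (y i) = c i := hyi
        rw [dist_comm, ← this, ha2 (y i)]
        exact gcov (y i)
      · rw [hyi, dist_self]; linarith
    calc Metric.infDist s (Set.range y ∪ C0) ≤ dist s (y i) := hsyi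
      _ ≤ dist s (c i) + dist (c i) (y i) := dist_triangle _ _ _
      _ ≤ 4 * rfair := by linarith
  · -- a s ∈ C0
    have h1 : Metric.infDist s (Set.range y ∪ C0) ≤ dist s (a s) :=
      Metric.infDist_le_dist_of_mem (Or.inr hC0)
    have h2 : dist s (a s) ≤ 2 * rfair := by rw [ha2 s]; exact gcov s
    linarith
end
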